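/- The function t ↦ log Φ(t), where Φ is the standard normal CDF, is concave on ℝ; equivalently, for all t, Φ''(t)Φ(t) ≤ Φ'(t)², i.e., −t·φ(t)·Φ(t) ≤ φ(t)² where φ is the standard normal density. -/
import Mathlib

open MeasureTheory

/-- Standard normal density. -/
noncomputable def stdNormalPDF (x : ℝ) : ℝ := Real.exp (-(x ^ 2) / 2) / Real.sqrt (2 * Real.pi)

/-- Standard normal CDF. -/
noncomputable def stdNormalCDF (x : ℝ) : ℝ := ∫ t in Set.Iic x, stdNormalPDF t

open Real Set Filter Topology

lemma pdf_pos (x : ℝ) : 0 < stdNormalPDF x :=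
  div_pos (exp_pos _) (Real.sqrt_pos.2 (by positivity))

lemma pdf_continuous : Continuous stdNormalPDF := by
  unfold stdNormalPDF; fun_prop

lemma pdf_integrable : Integrable stdNormalPDF := by
  have h := (integrable_exp_neg_mul_sq (b := (1:ℝ)/2) (by norm_num)).div_const
    (Real.sqrt (2 * Real.pi))
  refine h.congr (Eventually.of_forall fun x => ?_)
  unfold stdNormalPDF
  ring_nf

lemma pdf_hasDeriv (x : ℝ) : HasDerivAt stdNormalPDF (-x * stdNormalPDF x) x := by
  have h1 : HasDerivAt (fun y : ℝ => -(y ^ 2) / 2) (-x) x := by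
    have := ((hasDerivAt_pow 2 x).neg).div_const 2
    simpa using this.congr_deriv (by ring)
  have h2 := (h1.exp).div_const (Real.sqrt (2 * Real.pi))
  have : HasDerivAt stdNormalPDF (Real.exp (-(x ^ 2) / 2) * (-x) / Real.sqrt (2 * Real.pi)) x := h2
  refine this.congr_deriv ?_
  unfold stdNormalPDF; ring

lemma xpdf_integrable : Integrable (fun x : ℝ => x * stdNormalPDF x) := by
  have h := ((integrable_rpow_mul_exp_neg_mul_sq (b := (1:ℝ)/2) (by norm_num)
    (s := 1) (by norm_num))).div_const (Real.sqrt (2 * Real.pi))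
  refine h.congr (Eventually.of_forall fun x => ?_)
  simp only [Real.rpow_one]
  unfold stdNormalPDF
  ring_nf

lemma pdf_tendsto_atBot : Tendsto stdNormalPDF atBot (𝓝 0) := by
  have h0 : Tendsto (fun x : ℝ => x ^ 2) atTop atTop :=
    tendsto_pow_atTop (by norm_num)
  have h1 : Tendsto (fun x : ℝ => x ^ 2) atBot atTop := by
    have := h0.comp tendsto_neg_atBot_atTop
    refine this.congr fun x => ?_
    simp [Function.comp_def]
  have h2 : Tendsto (fun x : ℝ => -(x ^ 2) / 2) atBot atBot :=
    (tendsto_neg_atTop_atBot.comp h1).atBot_div_const (by norm_num)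
  have h3 := (Real.tendsto_exp_atBot.comp h2).div_const (Real.sqrt (2 * Real.pi))
  have h4 : (0:ℝ) / Real.sqrt (2 * Real.pi) = 0 := by simp
  rw [h4] at h3
  refine h3.congr fun x => ?_
  simp [Function.comp_def, stdNormalPDF]

lemma key_integral (t : ℝ) :
    ∫ s in Iic t, (-s * stdNormalPDF s) = stdNormalPDF t := by
  have h := integral_Iic_of_hasDerivAt_of_tendsto' (a := t)
    (f := stdNormalPDF) (f' := fun s => -s * stdNormalPDF s)
    (fun x _ => pdf_hasDeriv x) ((xpdf_integrable.neg.congr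
      (Eventually.of_forall fun x => by simp only [Pi.neg_apply]; ring)).integrableOn)
      pdf_tendsto_atBot
  simpa using h

lemma cdf_pos (t : ℝ) : 0 < stdNormalCDF t := by
  rw [stdNormalCDF, setIntegral_pos_iff_support_of_nonneg_ae
    (Eventually.of_forall fun x => (pdf_pos x).le) pdf_integrable.integrableOn]
  have : Function.support stdNormalPDF = univ := by
    ext x; simp [(pdf_pos x).ne']
  rw [this, univ_inter, Real.volume_Iic]
  exact ENNReal.zero_lt_top

lemma cdf_hasDeriv (x : ℝ) : HasDerivAt stdNormalCDF (stdNormalPDF x) x := by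
  have heq : stdNormalCDF = fun y => stdNormalCDF 0 + ∫ s in (0:ℝ)..y, stdNormalPDF s := by
    funext y
    rw [stdNormalCDF, stdNormalCDF,
      ← intervalIntegral.integral_Iic_sub_Iic pdf_integrable.integrableOn
        pdf_integrable.integrableOn]
    ring
  rw [heq]
  exact ((intervalIntegral.integral_hasDerivAt_right
    pdf_integrable.intervalIntegrable
    pdf_continuous.stronglyMeasurable.stronglyMeasurableAtFilter
    pdf_continuous.continuousAt).const_add (stdNormalCDF 0))

lemma key_ineq (t : ℝ) :
    -t * stdNormalPDF t * stdNormalCDF t ≤ (stdNormalPDF t) ^ 2 := by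
  have hφ := pdf_pos t
  rcases le_or_gt 0 t with ht | ht
  · have h1 : -t * stdNormalPDF t * stdNormalCDF t ≤ 0 :=
      mul_nonpos_of_nonpos_of_nonneg
        (mul_nonpos_of_nonpos_of_nonneg (by linarith) hφ.le) (cdf_pos t).le
    nlinarith [sq_nonneg (stdNormalPDF t)]
  · -- t < 0 : show Φ t ≤ φ t / (-t)
    have hmono : stdNormalCDF t ≤ ∫ s in Iic t, t⁻¹ * (s * stdNormalPDF s) := by
      rw [stdNormalCDF]
      refine setIntegral_mono_on pdf_integrable.integrableOn
        ((xpdf_integrable.const_mul t⁻¹).integrableOn) measurableSet_Iic ?_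
      intro s hs
      have hs' : s ≤ t := hs
      have h1 : (1 : ℝ) ≤ t⁻¹ * s := by
        rw [← div_eq_inv_mul]
        rw [le_div_iff_of_neg ht]
        simpa using hs'
      have := mul_le_mul_of_nonneg_right h1 (pdf_pos s).le
      calc stdNormalPDF s = 1 * stdNormalPDF s := by ring
        _ ≤ t⁻¹ * s * stdNormalPDF s := this
        _ = t⁻¹ * (s * stdNormalPDF s) := by ring
    have hint : ∫ s in Iic t, t⁻¹ * (s * stdNormalPDF s) = t⁻¹ * (- stdNormalPDF t) := by
      rw [integral_const_mul]
      congr 1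
      have h3 := key_integral t
      have h4 : ∫ s in Iic t, -(s * stdNormalPDF s) = stdNormalPDF t := by
        rw [← h3]; congr 1; funext s; ring
      rw [integral_neg] at h4
      linarith
    rw [hint] at hmono
    have hcdf : stdNormalCDF t ≤ stdNormalPDF t / (-t) := by
      rw [div_eq_inv_mul]
      calc stdNormalCDF t ≤ t⁻¹ * (- stdNormalPDF t) := hmono
        _ = (-t)⁻¹ * stdNormalPDF t := by rw [← neg_inv]; ring
    have hnt : (0:ℝ) < -t := by linarith
    have := mul_le_mul_of_nonneg_left hcdf hnt.le
    rw [mul_div_cancel₀ _ hnt.ne'] at this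
    nlinarith [hφ.le, this]

/-- `t ↦ log Φ(t)` is concave on ℝ; equivalently `Φ''(t)Φ(t) ≤ Φ'(t)²`,
i.e. `−t φ(t) Φ(t) ≤ φ(t)²`. -/
theorem stmt4 :
    ConcaveOn ℝ Set.univ (fun t : ℝ => Real.log (stdNormalCDF t)) ∧
    ∀ t : ℝ, -t * stdNormalPDF t * stdNormalCDF t ≤ (stdNormalPDF t) ^ 2 := by
  constructor
  · refine concaveOn_of_hasDerivWithinAt2_nonpos (f' := fun t => stdNormalPDF t / stdNormalCDF t)
      (f'' := fun t => ((-t * stdNormalPDF t) * stdNormalCDF t - stdNormalPDF t * stdNormalPDF t)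
        / (stdNormalCDF t) ^ 2)
      convex_univ ?_ ?_ ?_ ?_
    · exact fun x _ => ((cdf_hasDeriv x).log (cdf_pos x).ne').continuousAt.continuousWithinAt
    · intro x _
      exact ((cdf_hasDeriv x).log (cdf_pos x).ne').hasDerivWithinAt
    · intro x _
      exact (((pdf_hasDeriv x).div (cdf_hasDeriv x) (cdf_pos x).ne')).hasDerivWithinAt
    · intro x _
      apply div_nonpos_of_nonpos_of_nonneg
      · have := key_ineq x
        nlinarith
      · positivity
  · exact key_ineq
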